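/- In the basic model, assume additionally that (B−1)·a·b + n·(a·N − 1) > 0, let E = (1/(aBN))·Σ_{k=1}^{aBN} α_k denote the mean Age-of-Information and let Ê = (B' + N' − n)/2 be its approximation. Then the relative approximation error satisfies |E − Ê| / E ≤ a·b / ( (B−1)·a·b + n·(a·N − 1) ). -/

import Mathlib

open Finset

/-- Permutation-of-range sum lemma. -/
lemma sum_range_comp_perm {M : Type*} [AddCommMonoid M] (f : ℕ → M) (σ : ℕ → ℕ) (B : ℕ)
    (hmap : ∀ k < B, σ k < B)
    (hinj : ∀ k₁ < B, ∀ k₂ < B, σ k₁ = σ k₂ → k₁ = k₂) :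
    ∑ k ∈ range B, f (σ k) = ∑ j ∈ range B, f j := by
  refine Finset.sum_bij (fun k _ => σ k) ?_ ?_ ?_ ?_
  · intro a ha; exact mem_range.2 (hmap a (mem_range.1 ha))
  · intro a₁ h₁ a₂ h₂ h
    exact hinj a₁ (mem_range.1 h₁) a₂ (mem_range.1 h₂) h
  · intro b hb
    have := Finset.surj_on_of_inj_on_of_card_le (s := range B) (t := range B)
      (fun k _ => σ k) (fun a ha => mem_range.2 (hmap a (mem_range.1 ha)))
      (fun a₁ a₂ h₁ h₂ h => hinj a₁ (mem_range.1 h₁) a₂ (mem_range.1 h₂) h) le_rfl b hb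
    obtain ⟨a, ha, h⟩ := this
    exact ⟨a, ha, h.symm⟩
  · intro a _; rfl

/-- shift bijection -/
lemma sum_range_shift {M : Type*} [AddCommMonoid M] (f : ℕ → M) (B d : ℕ) (hB : 0 < B) :
    ∑ k ∈ range B, f ((k + d) % B) = ∑ j ∈ range B, f j := by
  refine sum_range_comp_perm f _ B (fun k _ => Nat.mod_lt _ hB) ?_
  intro k₁ h₁ k₂ h₂ h
  have : k₁ + d ≡ k₂ + d [MOD B] := h
  have h2 : k₁ ≡ k₂ [MOD B] := Nat.ModEq.add_right_cancel' d this
  calc k₁ = k₁ % B := (Nat.mod_eq_of_lt h₁).symm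
    _ = k₂ % B := h2
    _ = k₂ := Nat.mod_eq_of_lt h₂

/-- multiplication bijection -/
lemma sum_range_mul_perm {M : Type*} [AddCommMonoid M] (f : ℕ → M) (B c : ℕ) (hB : 0 < B)
    (hc : Nat.gcd B c = 1) :
    ∑ k ∈ range B, f ((k * c) % B) = ∑ j ∈ range B, f j := by
  refine sum_range_comp_perm f _ B (fun k _ => Nat.mod_lt _ hB) ?_
  intro k₁ h₁ k₂ h₂ h
  have : k₁ * c ≡ k₂ * c [MOD B] := h
  have h2 : k₁ ≡ k₂ [MOD B] := Nat.ModEq.cancel_right_of_coprime hc this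
  calc k₁ = k₁ % B := (Nat.mod_eq_of_lt h₁).symm
    _ = k₂ % B := h2
    _ = k₂ := Nat.mod_eq_of_lt h₂

/-- block decomposition -/
lemma sum_range_mul_eq_double {M : Type*} [AddCommMonoid M] (f : ℕ → M) (B r : ℕ) :
    ∑ j ∈ range (B * r), f j = ∑ e ∈ range B, ∑ t ∈ range r, f (e * r + t) := by
  induction B with
  | zero => simp
  | succ B ih =>
    rw [Finset.sum_range_succ, ← ih, Nat.succ_mul, Finset.sum_range_add]

open Finset

-- key: (b*x + s) % (B*b) = b*(x % B) + s for s < b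
lemma key_mod (B b x s : ℕ) (hB : 0 < B) (hs : s < b) :
    (b * x + s) % (B * b) = b * (x % B) + s := by
  have h1 : (b * x) % (B * b) = b * (x % B) := by
    rw [mul_comm B b]; exact Nat.mul_mod_mul_left b x B
  have hlt : b * (x % B) + s < B * b := by
    have : x % B + 1 ≤ B := Nat.mod_lt x hB
    calc b * (x % B) + s < b * (x % B) + b := by omega
      _ = b * (x % B + 1) := by ring
      _ ≤ b * B := Nat.mul_le_mul_left b this
      _ = B * b := mul_comm b B
  calc (b * x + s) % (B * b) = ((b * x) % (B*b) + s % (B*b)) % (B * b) := by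
        rw [Nat.add_mod]
      _ = (b * (x % B) + s) % (B * b) := by
        rw [h1, Nat.mod_eq_of_lt (lt_of_lt_of_le hs (by nlinarith))]
      _ = b * (x % B) + s := Nat.mod_eq_of_lt hlt

-- H5: inner sum
lemma aoi_inner_sum (B b c : ℕ) (hB : 0 < B) (hb : 0 < b) :
    ∑ e ∈ range B, (b * e + c) % (B * b)
      = b * (∑ e ∈ range B, e) + B * (c % b) := by
  have step : ∀ e, (b * e + c) % (B * b) = b * ((e + c / b) % B) + c % b := by
    intro e
    have hcb : b * (c / b) + c % b = c := Nat.div_add_mod c b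
    have : b * e + c = b * (e + c / b) + c % b := by
      calc b * e + c = b * e + (b * (c / b) + c % b) := by rw [hcb]
        _ = b * (e + c / b) + c % b := by ring
    rw [this, key_mod B b _ _ hB (Nat.mod_lt c hb)]
  calc ∑ e ∈ range B, (b * e + c) % (B * b)
      = ∑ e ∈ range B, (b * ((e + c / b) % B) + c % b) := by
        exact Finset.sum_congr rfl (fun e _ => step e)
    _ = (∑ e ∈ range B, b * ((e + c / b) % B)) + B * (c % b) := by
        rw [Finset.sum_add_distrib]; simp [Finset.sum_const, mul_comm]
    _ = b * (∑ e ∈ range B, ((e + c / b) % B)) + B * (c % b) := by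
        rw [Finset.mul_sum]
    _ = b * (∑ e ∈ range B, e) + B * (c % b) := by
        rw [sum_range_shift (fun z => z) B (c / b) hB]

-- the per-index reduction in ℕ
lemma nat_pointwise (A B N a b n k : ℕ) (hapos : 0 < a) (hnpos : 0 < n) (hN : 0 < N) :
    (k*(A*b*n)) % (N*a*n) + ((N*a*n) * ((k*(A*b*n)) / (N*a*n))) % (B*a*b)
    = n * ((b * ((k*A) % (a*B*N))) % (N*a))
      + a * (((N*n) * ((b * ((k*A) % (a*B*N))) / (N*a))) % (B*b)) := by
  set K := k * A with hK
  set P := a * B * N with hP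
  set r := N * a with hr
  have hrP : P = r * B := by rw [hP, hr]; ring
  -- part 1
  have e1 : k*(A*b*n) = n*(K*b) := by rw [hK]; ring
  have e2 : N*a*n = n*r := by rw [hr]; ring
  have p1 : (k*(A*b*n)) % (N*a*n) = n * ((K*b) % r) := by
    rw [e1, e2, Nat.mul_mod_mul_left]
  have hme : (K % P) * b ≡ K * b [MOD r] := by
    refine Nat.ModEq.mul_right b ?_
    exact Nat.ModEq.of_dvd ⟨B, hrP⟩ (Nat.mod_modEq K P)
  have p1' : (K*b) % r = (b * (K % P)) % r := by
    rw [mul_comm b (K % P)]; exact hme.symm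
  -- part 2
  have d1 : (k*(A*b*n)) / (N*a*n) = (K*b) / r := by
    rw [e1, e2, Nat.mul_div_mul_left _ _ hnpos]
  have e3 : N*a*n = a*(N*n) := by ring
  have e4 : B*a*b = a*(B*b) := by ring
  have p2 : ((N*a*n) * ((k*(A*b*n)) / (N*a*n))) % (B*a*b)
      = a * (((N*n) * ((K*b) / r)) % (B*b)) := by
    rw [d1, e3, e4, mul_assoc, Nat.mul_mod_mul_left]
  -- replace (K*b)/r by (b*(K%P))/r modulo B*b
  have hsplit : K * b = b * (K % P) + ((B*b)*(K / P)) * r := by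
    conv_lhs => rw [← Nat.div_add_mod K P]
    rw [hrP]; ring
  have d2 : (K*b) / r = (b * (K % P)) / r + (B*b)*(K / P) := by
    rw [hsplit, Nat.add_mul_div_right _ _ (by rw [hr]; positivity : 0 < r)]
  have p2' : ((N*n) * ((K*b) / r)) % (B*b)
      = ((N*n) * ((b * (K % P)) / r)) % (B*b) := by
    rw [d2, mul_add]
    rw [show (N*n) * ((B*b)*(K / P)) = ((N*n) * (K/P)) * (B*b) by ring]
    rw [Nat.add_mul_mod_self_right]
  rw [p1, p1', p2, p2']

def gAux (B N a b n : ℕ) (j : ℕ) : ℕ :=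
  n * ((b * j) % (N*a)) + a * (((N*n) * ((b * j) / (N*a))) % (B*b))

lemma sum_g (B N a b n : ℕ) (hB : 0 < B) (hb : 0 < b) (hN : 0 < N) (ha : 0 < a)
    (hbr : Nat.gcd (N*a) b = 1) (hBu : Nat.gcd B (N*n) = 1) :
    ∑ j ∈ range (B*(N*a)), gAux B N a b n j
    = n * (B * ∑ t ∈ range (N*a), t)
      + a * ((N*a) * (b * ∑ e ∈ range B, e)
          + B * (∑ t ∈ range (N*a), ((N*n) * ((b*t) / (N*a))) % b)) := by
  set r := N*a with hrdef
  have hr : 0 < r := by positivity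
  rw [sum_range_mul_eq_double]
  -- pointwise simplification of gAux (e*r + t)
  have hpt : ∀ e t : ℕ, gAux B N a b n (e*r + t)
      = n * ((b*t) % r) + a * (((N*n) * (b*e + (b*t)/r)) % (B*b)) := by
    intro e t
    unfold gAux
    have h1 : b * (e*r + t) = b*t + (b*e)*r := by ring
    have h2 : (b * (e*r + t)) % r = (b*t) % r := by rw [h1, Nat.add_mul_mod_self_right]
    have h3 : (b * (e*r + t)) / r = b*e + (b*t)/r := by
      rw [h1, Nat.add_mul_div_right _ _ hr, add_comm]
    rw [h2, h3]
  calc ∑ e ∈ range B, ∑ t ∈ range r, gAux B N a b n (e*r + t)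
      = ∑ e ∈ range B, ∑ t ∈ range r,
          (n * ((b*t) % r) + a * (((N*n) * (b*e + (b*t)/r)) % (B*b))) := by
        exact Finset.sum_congr rfl fun e _ => Finset.sum_congr rfl fun t _ => hpt e t
    _ = (∑ e ∈ range B, ∑ t ∈ range r, n * ((b*t) % r))
        + (∑ t ∈ range r, ∑ e ∈ range B, a * (((N*n) * (b*e + (b*t)/r)) % (B*b))) := by
        calc ∑ e ∈ range B, ∑ t ∈ range r,
              (n * ((b*t) % r) + a * (((N*n) * (b*e + (b*t)/r)) % (B*b)))
            = ∑ e ∈ range B, ((∑ t ∈ range r, n * ((b*t) % r))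
                + ∑ t ∈ range r, a * (((N*n) * (b*e + (b*t)/r)) % (B*b))) :=
              Finset.sum_congr rfl fun e _ => Finset.sum_add_distrib
          _ = (∑ e ∈ range B, ∑ t ∈ range r, n * ((b*t) % r))
              + ∑ e ∈ range B, ∑ t ∈ range r, a * (((N*n) * (b*e + (b*t)/r)) % (B*b)) :=
              Finset.sum_add_distrib
          _ = _ := by congr 1; exact Finset.sum_comm
    _ = n * (B * ∑ t ∈ range r, t)
        + a * (r * (b * ∑ e ∈ range B, e)
            + B * (∑ t ∈ range r, ((N*n) * ((b*t)/r)) % b)) := by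
        congr 1
        · -- first piece
          rw [Finset.sum_const]
          simp only [smul_eq_mul, Finset.card_range]
          rw [← Finset.mul_sum]
          have : ∑ t ∈ range r, (b*t) % r = ∑ t ∈ range r, t := by
            have := sum_range_mul_perm (fun z => z) r b hr hbr
            simpa [mul_comm] using this
          rw [this]; ring
        · -- second piece
          have hinner : ∀ t : ℕ, ∑ e ∈ range B, (((N*n) * (b*e + (b*t)/r)) % (B*b))
              = b * (∑ e ∈ range B, e) + B * (((N*n) * ((b*t)/r)) % b) := by
            intro t
            set c := (N*n) * ((b*t)/r) with hc
            have step1 : ∀ e : ℕ, ((N*n) * (b*e + (b*t)/r)) % (B*b)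
                = (b * (((N*n)*e) % B) + c) % (B*b) := by
              intro e
              have harg : (N*n) * (b*e + (b*t)/r) = b * ((N*n)*e) + c := by rw [hc]; ring
              have hmeq : b * ((N*n)*e) + c ≡ b * (((N*n)*e) % B) + c [MOD b*B] := by
                exact Nat.ModEq.add_right c
                  (Nat.ModEq.mul_left' b (Nat.mod_modEq ((N*n)*e) B).symm)
              rw [harg]
              have := hmeq
              rw [mul_comm b B] at this
              exact this
            calc ∑ e ∈ range B, (((N*n) * (b*e + (b*t)/r)) % (B*b))
                = ∑ e ∈ range B, ((fun z => (b*z + c) % (B*b)) (((N*n)*e) % B)) := by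
                  exact Finset.sum_congr rfl fun e _ => step1 e
              _ = ∑ e ∈ range B, (b*e + c) % (B*b) := by
                  have := sum_range_mul_perm (fun z => (b*z + c) % (B*b)) B (N*n) hB hBu
                  simpa [mul_comm] using this
              _ = b * (∑ e ∈ range B, e) + B * (c % b) := aoi_inner_sum B b c hB hb
          calc ∑ t ∈ range r, ∑ e ∈ range B, a * (((N*n) * (b*e + (b*t)/r)) % (B*b))
              = ∑ t ∈ range r, a * (b * (∑ e ∈ range B, e) + B * (((N*n) * ((b*t)/r)) % b)) := by
                refine Finset.sum_congr rfl fun t _ => ?_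
                rw [← Finset.mul_sum, hinner t]
            _ = a * (r * (b * ∑ e ∈ range B, e)
                  + B * (∑ t ∈ range r, ((N*n) * ((b*t)/r)) % b)) := by
                rw [← Finset.mul_sum]
                congr 1
                rw [Finset.sum_add_distrib, Finset.sum_const]
                simp only [smul_eq_mul, Finset.card_range]
                rw [← Finset.mul_sum]

lemma sum_Icc_perm (g : ℕ → ℕ) (A P : ℕ) (hP : 0 < P) (hAP : Nat.gcd P A = 1) :
    ∑ k ∈ Finset.Icc 1 P, g ((k*A) % P) = ∑ j ∈ range P, g j := by
  set h : ℕ → ℕ := fun k => g ((k*A) % P) with hh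
  have e1 : ∑ k ∈ Finset.Icc 1 P, h k = ∑ i ∈ range P, h (1 + i) := by
    rw [show Finset.Icc 1 P = Finset.Ico 1 (P+1) by rw [Finset.Ico_add_one_right_eq_Icc]]
    rw [Finset.sum_Ico_eq_sum_range]
    norm_num
  have e2 : ∑ i ∈ range P, h (1 + i) = ∑ i ∈ range P, h i := by
    have h0 : h P = h 0 := by
      simp only [hh, Nat.mul_mod_left, zero_mul, Nat.zero_mod]
      rw [Nat.mul_mod, Nat.mod_self, zero_mul, Nat.zero_mod]
    have a1 : ∑ i ∈ range (P+1), h i = ∑ i ∈ range P, h (i+1) + h 0 :=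
      Finset.sum_range_succ' h P
    have a2 : ∑ i ∈ range (P+1), h i = ∑ i ∈ range P, h i + h P :=
      Finset.sum_range_succ h P
    have : ∑ i ∈ range P, h (i+1) = ∑ i ∈ range P, h i := by omega
    simpa [add_comm] using this
  rw [e1, e2, hh]
  exact sum_range_mul_perm g P A hP hAP

/-- The Age-of-Information sequence of the basic model:
`α_k = (k·A' % N') + ((k·A' % B' − k·A' % N') % B')`. -/
def aoiBasic (A' B' N' : ℤ) (k : ℕ) : ℤ :=
  ((k : ℤ) * A') % N' + (((k : ℤ) * A') % B' - ((k : ℤ) * A') % N') % B'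

/-- The mean Age-of-Information of the basic model over one period. -/
def meanAoiBasic (A B N a b n : ℕ) : ℚ :=
  (1 / ((a : ℚ) * B * N)) *
    ∑ k ∈ Finset.Icc 1 (a * B * N),
      ((aoiBasic (A * b * n : ℤ) (B * a * b : ℤ) (N * a * n : ℤ) k : ℤ) : ℚ)

lemma aoi_eq_int (A' B' N' : ℤ) (k : ℕ) :
    aoiBasic A' B' N' k = ((k : ℤ) * A') % N' + (N' * (((k : ℤ) * A') / N')) % B' := by
  unfold aoiBasic
  congr 1
  set x := (k : ℤ) * A' with hx
  have h1 : (x % B' - x % N') % B' = (x - x % N') % B' := by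
    conv_lhs => rw [Int.sub_emod]
    conv_rhs => rw [Int.sub_emod]
    rw [Int.emod_emod_of_dvd x dvd_rfl]
  rw [h1]
  congr 1
  rw [Int.emod_def]
  ring

lemma aoi_cast (A B N a b n k : ℕ) (hapos : 0 < a) (hnpos : 0 < n) (hN : 0 < N) :
    aoiBasic (A * b * n : ℤ) (B * a * b : ℤ) (N * a * n : ℤ) k
      = (gAux B N a b n ((k*A) % (a*B*N)) : ℤ) := by
  rw [aoi_eq_int]
  have h1 : ((k : ℤ) * (A * b * n)) = ((k * (A*b*n) : ℕ) : ℤ) := by push_cast; ring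
  rw [h1]
  have h2 : ((N : ℤ) * a * n) = ((N*a*n : ℕ) : ℤ) := by push_cast; ring
  have h3 : ((B : ℤ) * a * b) = ((B*a*b : ℕ) : ℤ) := by push_cast; ring
  rw [h2, h3]
  norm_cast
  rw [nat_pointwise A B N a b n k hapos hnpos hN]
  rfl

/-- Corollary 1, eq. (13): the relative error of the approximation
`Ê = (B' + N' − n)/2` of the mean AoI `E` of the basic model is at most
`a·b / ((B−1)·a·b + n·(a·N − 1))`. -/
theorem stmt8 (A B N a b n : ℕ) (hA : 0 < A) (hB : 0 < B) (hN : 0 < N)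
    (hapos : 0 < a) (hbpos : 0 < b) (hnpos : 0 < n)
    (ha : a = Nat.gcd (B * a * b) (N * a * n))
    (hb : b = Nat.gcd (A * b * n) (B * a * b))
    (hn : n = Nat.gcd (A * b * n) (N * a * n))
    (hpos : (0 : ℚ) < ((B : ℚ) - 1) * ((a : ℚ) * b) + (n : ℚ) * ((a : ℚ) * N - 1)) :
    |meanAoiBasic A B N a b n - ((B : ℚ) * a * b + (N : ℚ) * a * n - n) / 2| /
        meanAoiBasic A B N a b n ≤
      ((a : ℚ) * b) / (((B : ℚ) - 1) * ((a : ℚ) * b) + (n : ℚ) * ((a : ℚ) * N - 1)) := by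
  -- coprimality facts
  have hgb : Nat.Coprime (A*n) (B*a) := by
    have h1 : Nat.gcd (A*b*n) (B*a*b) = b * Nat.gcd (A*n) (B*a) := by
      rw [show A*b*n = b*(A*n) by ring, show B*a*b = b*(B*a) by ring, Nat.gcd_mul_left]
    have h2 : b * 1 = b * Nat.gcd (A*n) (B*a) := by
      rw [mul_one, ← h1]; exact hb
    exact (Nat.eq_of_mul_eq_mul_left hbpos h2).symm
  have hgn : Nat.Coprime (A*b) (N*a) := by
    have h1 : Nat.gcd (A*b*n) (N*a*n) = n * Nat.gcd (A*b) (N*a) := by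
      rw [show A*b*n = n*(A*b) by ring, show N*a*n = n*(N*a) by ring, Nat.gcd_mul_left]
    have h2 : n * 1 = n * Nat.gcd (A*b) (N*a) := by
      rw [mul_one, ← h1]; exact hn
    exact (Nat.eq_of_mul_eq_mul_left hnpos h2).symm
  have hga : Nat.Coprime (B*b) (N*n) := by
    have h1 : Nat.gcd (B*a*b) (N*a*n) = a * Nat.gcd (B*b) (N*n) := by
      rw [show B*a*b = a*(B*b) by ring, show N*a*n = a*(N*n) by ring, Nat.gcd_mul_left]
    have h2 : a * 1 = a * Nat.gcd (B*b) (N*n) := by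
      rw [mul_one, ← h1]; exact ha
    exact (Nat.eq_of_mul_eq_mul_left hapos h2).symm
  have hbr : Nat.gcd (N*a) b = 1 :=
    (Nat.Coprime.coprime_dvd_left (dvd_mul_left b A) hgn).symm
  have hBu : Nat.gcd B (N*n) = 1 :=
    Nat.Coprime.coprime_dvd_left (dvd_mul_right B b) hga
  have cAa : Nat.Coprime A a :=
    Nat.Coprime.coprime_dvd_right (dvd_mul_left a B)
      (Nat.Coprime.coprime_dvd_left (dvd_mul_right A n) hgb)
  have cAB : Nat.Coprime A B :=
    Nat.Coprime.coprime_dvd_right (dvd_mul_right B a)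
      (Nat.Coprime.coprime_dvd_left (dvd_mul_right A n) hgb)
  have cAN : Nat.Coprime A N :=
    Nat.Coprime.coprime_dvd_right (dvd_mul_right N a)
      (Nat.Coprime.coprime_dvd_left (dvd_mul_right A b) hgn)
  have hAP : Nat.gcd (a*B*N) A = 1 := (Nat.Coprime.mul_right (cAa.mul_right cAB) cAN).symm
  -- positivity
  have hP : 0 < a*B*N := by positivity
  -- abbreviations
  set S : ℕ := ∑ j ∈ Finset.range (B*(N*a)), gAux B N a b n j with hS
  set R : ℕ := ∑ t ∈ Finset.range (N*a), ((N*n) * ((b*t) / (N*a))) % b with hR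
  -- step 1: the mean equals S / P
  have key1 : meanAoiBasic A B N a b n = (S : ℚ) / ((a:ℚ)*B*N) := by
    unfold meanAoiBasic
    have hsum : ∑ k ∈ Finset.Icc 1 (a*B*N),
        ((aoiBasic (A * b * n : ℤ) (B * a * b : ℤ) (N * a * n : ℤ) k : ℤ) : ℚ)
        = (S : ℚ) := by
      have e1 : ∀ k ∈ Finset.Icc 1 (a*B*N),
          ((aoiBasic (A * b * n : ℤ) (B * a * b : ℤ) (N * a * n : ℤ) k : ℤ) : ℚ)
          = ((gAux B N a b n ((k*A) % (a*B*N)) : ℕ) : ℚ) := by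
        intro k _
        rw [aoi_cast A B N a b n k hapos hnpos hN]
        push_cast
        ring
      rw [Finset.sum_congr rfl e1, ← Nat.cast_sum]
      rw [sum_Icc_perm (gAux B N a b n) A (a*B*N) hP hAP]
      rw [hS, show a*B*N = B*(N*a) by ring]
    rw [hsum]
    ring
  -- step 2: value of S
  have key2 := sum_g B N a b n hB hbpos hN hapos hbr hBu
  -- Gauss sums
  have g1 : ((∑ t ∈ Finset.range (N*a), t : ℕ) : ℚ) * 2 = (N:ℚ)*a*((N:ℚ)*a - 1) := by
    have := Finset.sum_range_id_mul_two (N*a)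
    have hc : (((∑ t ∈ Finset.range (N*a), t) * 2 : ℕ) : ℚ) = (((N*a)*(N*a-1) : ℕ) : ℚ) := by
      exact_mod_cast congrArg (Nat.cast : ℕ → ℚ) this
    push_cast [Nat.cast_sub (show 1 ≤ N*a from Nat.mul_pos hN hapos)] at hc
    push_cast
    linarith [hc]
  have g2 : ((∑ e ∈ Finset.range B, e : ℕ) : ℚ) * 2 = (B:ℚ)*((B:ℚ) - 1) := by
    have := Finset.sum_range_id_mul_two B
    have hc : (((∑ e ∈ Finset.range B, e) * 2 : ℕ) : ℚ) = ((B*(B-1) : ℕ) : ℚ) := by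
      exact_mod_cast congrArg (Nat.cast : ℕ → ℚ) this
    push_cast [Nat.cast_sub (show 1 ≤ B from hB)] at hc
    push_cast
    linarith [hc]
  -- cast key2 to ℚ
  have key2q : (S:ℚ) = (n:ℚ) * (B * (∑ t ∈ Finset.range (N*a), t : ℕ))
      + (a:ℚ) * ((N:ℚ)*a * (b * (∑ e ∈ Finset.range B, e : ℕ)) + B * (R:ℚ)) := by
    rw [hS, key2]
    push_cast [hR]
    ring
  set Dq : ℚ := ((B : ℚ) - 1) * ((a : ℚ) * b) + (n : ℚ) * ((a : ℚ) * N - 1) with hDq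
  have k2 : 2 * (S:ℚ) = ((a:ℚ)*B*N) * Dq + 2*(a:ℚ)*B*(R:ℚ) := by
    rw [hDq]
    linear_combination 2*key2q + ((n:ℚ)*B)*g1 + ((a:ℚ)*((N:ℚ)*a)*b)*g2
  -- bound on R
  have hRb : (R:ℚ) ≤ (N:ℚ)*a*b := by
    have : R ≤ (N*a) * b := by
      rw [hR]
      calc ∑ t ∈ Finset.range (N*a), ((N*n) * ((b*t) / (N*a))) % b
          ≤ ∑ t ∈ Finset.range (N*a), b :=
            Finset.sum_le_sum (fun t _ => le_of_lt (Nat.mod_lt _ hbpos))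
        _ = (N*a) * b := by rw [Finset.sum_const, Finset.card_range, smul_eq_mul]
    calc (R:ℚ) ≤ (((N*a)*b : ℕ) : ℚ) := by exact_mod_cast this
      _ = (N:ℚ)*a*b := by push_cast; ring
  have hR0 : (0:ℚ) ≤ (R:ℚ) := Nat.cast_nonneg R
  -- final computation
  have hPq : (0:ℚ) < (a:ℚ)*B*N := by positivity
  have hNq : (0:ℚ) < (N:ℚ) := by positivity
  have hEeq : meanAoiBasic A B N a b n = Dq/2 + (R:ℚ)/N := by
    rw [key1]
    rw [div_eq_iff (ne_of_gt hPq)]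
    field_simp
    linear_combination k2
  have hab : (0:ℚ) ≤ (a:ℚ)*b := by positivity
  have hyb : (R:ℚ)/N ≤ (a:ℚ)*b := by
    rw [div_le_iff₀ hNq]
    calc (R:ℚ) ≤ (N:ℚ)*a*b := hRb
      _ = (a:ℚ)*b*N := by ring
  have hy0 : (0:ℚ) ≤ (R:ℚ)/N := by positivity
  have hEpos : (0:ℚ) < meanAoiBasic A B N a b n := by
    rw [hEeq]; linarith [hpos]
  have hhat : ((B : ℚ) * a * b + (N : ℚ) * a * n - n) / 2 = Dq/2 + (a:ℚ)*b/2 := by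
    rw [hDq]; ring
  rw [hEeq, hhat]
  have habs : |Dq/2 + (R:ℚ)/N - (Dq/2 + (a:ℚ)*b/2)| ≤ (a:ℚ)*b/2 := by
    rw [show Dq/2 + (R:ℚ)/N - (Dq/2 + (a:ℚ)*b/2) = (R:ℚ)/N - (a:ℚ)*b/2 by ring]
    rw [abs_le]
    constructor <;> linarith
  have hE2 : Dq/2 ≤ Dq/2 + (R:ℚ)/N := by linarith
  have hEpos' : (0:ℚ) < Dq/2 + (R:ℚ)/N := by linarith [hpos]
  calc |Dq/2 + (R:ℚ)/N - (Dq/2 + (a:ℚ)*b/2)| / (Dq/2 + (R:ℚ)/N)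
      ≤ ((a:ℚ)*b/2) / (Dq/2 + (R:ℚ)/N) := by
        exact (div_le_div_iff_of_pos_right hEpos').mpr habs
    _ ≤ ((a:ℚ)*b/2) / (Dq/2) := by
        exact div_le_div_of_nonneg_left (by positivity) (by linarith) hE2
    _ = ((a:ℚ)*b) / Dq := by
        rw [div_div_div_comm]
        norm_num
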